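/- Let r > 0 and V > 0 be real numbers, and let ψ : ℝ → ℝ be a function such that ψ(t) > 0 for all t > 0, ψ is nonincreasing on (0,∞), and for every t > 0, ψ is differentiable at t with deriv ψ t ≤ (2/V^2 - ψ(t/2)^2)/r. Then for every t > 0, ψ(t) ≤ max (2/V) (2*r/t). -/

import Mathlib

/-- Analytic core of Theorem 4.1: if `ψ > 0` is nonincreasing on `(0,∞)` and
satisfies the differential inequality `ψ'(t) ≤ (2/V² - ψ(t/2)²)/r`, then
`ψ(t) ≤ (2/V) ∨ (2r/t)` for all `t > 0`. -/
theorem differential_inequality_heat_kernel_bound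
    (r V : ℝ) (hr : 0 < r) (hV : 0 < V) (ψ : ℝ → ℝ)
    (hpos : ∀ t > 0, 0 < ψ t)
    (hmono : AntitoneOn ψ (Set.Ioi (0 : ℝ)))
    (hderiv : ∀ t > 0, DifferentiableAt ℝ ψ t ∧
      deriv ψ t ≤ (2 / V ^ 2 - ψ (t / 2) ^ 2) / r) :
    ∀ t > 0, ψ t ≤ max (2 / V) (2 * r / t) := by
  intro t ht
  by_contra hcon
  push_neg at hcon
  rw [max_lt_iff] at hcon
  obtain ⟨h1, h2⟩ := hcon
  have hψt : 0 < ψ t := hpos t ht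
  set C : ℝ := ψ t ^ 2 / (2 * r) with hC
  have hCpos : 0 < C := by positivity
  set g : ℝ → ℝ := fun s => ψ s + C * s with hg
  -- g is antitone on Icc t (2t)
  have hsub : Set.Icc t (2 * t) ⊆ Set.Ioi (0 : ℝ) := by
    intro s hs
    exact lt_of_lt_of_le ht hs.1
  have hdiff : ∀ s ∈ Set.Icc t (2 * t), DifferentiableAt ℝ g s := by
    intro s hs
    exact ((hderiv s (hsub hs)).1).add ((differentiable_id.const_mul C) s)
  have hanti : AntitoneOn g (Set.Icc t (2 * t)) := by
    apply antitoneOn_of_deriv_nonpos (convex_Icc t (2 * t))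
    · exact fun s hs => (hdiff s hs).continuousAt.continuousWithinAt
    · intro s hs
      rw [interior_Icc] at hs
      exact (hdiff s ⟨hs.1.le, hs.2.le⟩).differentiableWithinAt
    · intro s hs
      rw [interior_Icc] at hs
      have hspos : 0 < s := lt_trans ht hs.1
      have hd := hderiv s hspos
      have hderivg : deriv g s = deriv ψ s + C := by
        have := (hd.1.hasDerivAt.add ((hasDerivAt_id s).const_mul C)).deriv
        rw [mul_one] at this; exact this
      rw [hderivg]
      -- ψ (s/2) ≥ ψ t since s/2 ≤ t
      have hs2 : (0 : ℝ) < s / 2 := by linarith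
      have hle : ψ t ≤ ψ (s / 2) := hmono (Set.mem_Ioi.2 hs2) (Set.mem_Ioi.2 ht) (by linarith [hs.2])
      have hbound : deriv ψ s ≤ -C := by
        refine le_trans hd.2 ?_
        have h2V : 2 < ψ t * V := by
          rw [div_lt_iff₀ hV] at h1; linarith
        have hV2 : 2 / V ^ 2 < ψ t ^ 2 / 2 := by
          rw [div_lt_div_iff₀ (by positivity) two_pos]
          nlinarith
        have hsq : ψ t ^ 2 ≤ ψ (s / 2) ^ 2 := by nlinarith
        rw [div_le_iff₀ hr]
        have hCr : C * r = ψ t ^ 2 / 2 := by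
          rw [hC]; field_simp
        nlinarith
      linarith
  have hkey := hanti (Set.left_mem_Icc.2 (by linarith)) (Set.right_mem_Icc.2 (by linarith)) (by linarith)
  have h2t : 0 < ψ (2 * t) := hpos (2 * t) (by linarith)
  -- g (2t) ≤ g t : ψ(2t) + 2tC ≤ ψ t + tC
  simp only [hg] at hkey
  -- so C * t < ψ t, i.e. ψ t ^2 * t / (2r) < ψ t, i.e. ψ t < 2r/t
  have h2' : 2 * r < ψ t * t := by
    rw [div_lt_iff₀ ht] at h2; linarith
  have hC' : C * (2 * r) = ψ t ^ 2 := by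
    rw [hC]; field_simp
  nlinarith [mul_pos hψt ht, mul_pos hCpos ht]
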